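/- Let L be a finite-dimensional complex right Leibniz algebra with L/I ≅ sl_n (n ≥ 3) and dim I = 2. Then [I, L] = 0 and L ≅ sl_n ⊕ I, the direct sum of the Lie algebra sl_n and a 2-dimensional abelian ideal. -/

import Mathlib

open Matrix in
/-- If `C = A*B - B*A` commutes with both `A` and `B` for 2×2 complex matrices,
then `C = 0`. -/
lemma two_by_two_comm (A B : Matrix (Fin 2) (Fin 2) ℂ)
    (hA : A * (A * B - B * A) = (A * B - B * A) * A)
    (hB : B * (A * B - B * A) = (A * B - B * A) * B) :
    A * B - B * A = 0 := by
  have P00 : (A * (A * B - B * A)) 0 0 = ((A * B - B * A) * A) 0 0 := by rw [hA]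
  have P01 : (A * (A * B - B * A)) 0 1 = ((A * B - B * A) * A) 0 1 := by rw [hA]
  have P10 : (A * (A * B - B * A)) 1 0 = ((A * B - B * A) * A) 1 0 := by rw [hA]
  have Q01 : (B * (A * B - B * A)) 0 1 = ((A * B - B * A) * B) 0 1 := by rw [hB]
  have Q10 : (B * (A * B - B * A)) 1 0 = ((A * B - B * A) * B) 1 0 := by rw [hB]
  simp only [Matrix.mul_apply, Matrix.sub_apply, Fin.sum_univ_two] at P00 P01 P10 Q01 Q10
  have hq : A 0 0 * B 0 1 + A 0 1 * B 1 1 - (B 0 0 * A 0 1 + B 0 1 * A 1 1) = 0 := by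
    refine pow_eq_zero_iff (n := 2) (by norm_num) |>.mp ?_
    linear_combination (B 0 1) * P01 - (A 0 1) * Q01
  have hr : A 1 0 * B 0 0 + A 1 1 * B 1 0 - (B 1 0 * A 0 0 + B 1 1 * A 1 0) = 0 := by
    refine pow_eq_zero_iff (n := 2) (by norm_num) |>.mp ?_
    linear_combination (B 1 0) * P10 - (A 1 0) * Q10
  have hp : A 0 0 * B 0 0 + A 0 1 * B 1 0 - (B 0 0 * A 0 0 + B 0 1 * A 1 0) = 0 := by
    refine pow_eq_zero_iff (n := 2) (by norm_num) |>.mp ?_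
    linear_combination
      (-(A 1 0 * B 0 0 + A 1 1 * B 1 0 - (B 1 0 * A 0 0 + B 1 1 * A 1 0))) * hq
      - (1/2 : ℂ) * ((B 0 0 - B 1 1) * P00 + B 1 0 * P01 + B 0 1 * P10)
  have e00 : (A * B - B * A) 0 0 = 0 := by
    simp only [Matrix.mul_apply, Matrix.sub_apply, Fin.sum_univ_two]
    linear_combination hp
  have e01 : (A * B - B * A) 0 1 = 0 := by
    simp only [Matrix.mul_apply, Matrix.sub_apply, Fin.sum_univ_two]
    linear_combination hq
  have e10 : (A * B - B * A) 1 0 = 0 := by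
    simp only [Matrix.mul_apply, Matrix.sub_apply, Fin.sum_univ_two]
    linear_combination hr
  have e11 : (A * B - B * A) 1 1 = 0 := by
    simp only [Matrix.mul_apply, Matrix.sub_apply, Fin.sum_univ_two]
    linear_combination -hp
  ext i j
  fin_cases i <;> fin_cases j
  · exact e00
  · exact e01
  · exact e10
  · exact e11

open LieAlgebra.SpecialLinear in
def Eb (R : Type*) [CommRing R] {n : Type*} [DecidableEq n] [Fintype n] (i j : n)
    (h : j ≠ i) : sl n R :=
  LieAlgebra.SpecialLinear.single i j h.symm 1

open LieAlgebra.SpecialLinear in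
@[simp]
theorem Eb_val (R : Type*) [CommRing R] {n : Type*} [DecidableEq n] [Fintype n] (i j : n)
    (h : j ≠ i) : (Eb R i j h).val = Matrix.single i j 1 :=
  LieAlgebra.SpecialLinear.val_single i j h.symm 1

open LieAlgebra.SpecialLinear in
/-- Let `L` be a finite-dimensional complex right Leibniz algebra with
`L/I ≅ sl_n` (`n ≥ 3`), realized by a surjective bracket-preserving linear map
`π : L → sl_n` with kernel `I`, and with `dim I = 2`.  Then all products with `I`
vanish, so `L ≅ sl_n ⊕ I` is the direct sum of `sl_n` and a 2-dimensional abelian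
ideal. -/
theorem sln_two_dim_I_trivial
    (n : ℕ) (hn : 3 ≤ n)
    (L : Type*) [AddCommGroup L] [Module ℂ L] [FiniteDimensional ℂ L]
    (B : L →ₗ[ℂ] L →ₗ[ℂ] L)
    (leib : ∀ x y z : L, B x (B y z) = B (B x y) z - B (B x z) y)
    (I : Submodule ℂ L)
    (hI : I = Submodule.span ℂ {a : L | ∃ x : L, a = B x x})
    (hdim : Module.finrank ℂ I = 2)
    (π : L →ₗ[ℂ] ↥(sl (Fin n) ℂ))
    (hsurj : Function.Surjective π)
    (hker : LinearMap.ker π = I)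
    (hhom : ∀ a b : L, π (B a b) = ⁅π a, π b⁆) :
    ∀ a ∈ I, ∀ y : L, B a y = 0 ∧ B y a = 0 := by
  classical
  -- right multiplication by elements of I is zero
  have hBright : ∀ (x a : L), a ∈ I → B x a = 0 := by
    intro x a ha
    rw [hI] at ha
    induction ha using Submodule.span_induction with
    | mem z hz =>
      obtain ⟨w, hw⟩ := hz
      rw [hw, leib x w w]
      exact sub_self _
    | zero => simp
    | add y z _ _ hy hz => rw [map_add, hy, hz, add_zero]
    | smul t y _ hy => rw [map_smul, hy, smul_zero]
  -- I is stable under right multiplication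
  have hmemI : ∀ (a : L), a ∈ I → ∀ y : L, B a y ∈ I := by
    intro a ha y
    rw [← hker, LinearMap.mem_ker] at ha ⊢
    rw [hhom, ha, zero_lie]
  -- the representation of L on I by right multiplication
  let F : L →ₗ[ℂ] (↥I →ₗ[ℂ] ↥I) :=
    { toFun := fun y =>
        LinearMap.codRestrict I ((B.flip y).domRestrict I) (fun a => hmemI a a.2 y)
      map_add' := fun y z => LinearMap.ext fun a => Subtype.ext (map_add (B a.1) y z)
      map_smul' := fun t y => LinearMap.ext fun a => Subtype.ext (map_smul (B a.1) t y) }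
  have hR1 : ∀ y z : L, F (B y z) = F z * F y - F y * F z := by
    intro y z
    refine LinearMap.ext fun a => Subtype.ext ?_
    exact leib a.1 y z
  have hFI : ∀ y ∈ I, F y = 0 := by
    intro y hy
    refine LinearMap.ext fun a => Subtype.ext ?_
    exact hBright a.1 y hy
  have hFpi : ∀ y z : L, π y = π z → F y = F z := by
    intro y z hyz
    have hmem : y - z ∈ I := by
      rw [← hker, LinearMap.mem_ker, map_sub, hyz, sub_self]
    have h0 := hFI _ hmem
    rw [map_sub] at h0
    exact sub_eq_zero.mp h0
  -- basis of I and matrix transfer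
  let bI : Module.Basis (Fin 2) ℂ ↥I := Module.finBasisOfFinrankEq ℂ ↥I hdim
  let E := LinearMap.toMatrixAlgEquiv bI
  -- key step: brackets ⁅X,Y⁆ with ⁅X,⁅X,Y⁆⁆ = ⁅Y,⁅X,Y⁆⁆ = 0 act trivially
  have hgen : ∀ (X Y : ↥(sl (Fin n) ℂ)), ⁅X, ⁅X, Y⁆⁆ = 0 → ⁅Y, ⁅X, Y⁆⁆ = 0 →
      ∀ w : L, π w = ⁅X, Y⁆ → F w = 0 := by
    intro X Y hXX hYY w hw
    obtain ⟨u, hu⟩ := hsurj X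
    obtain ⟨v, hv⟩ := hsurj Y
    have hC : π (B u v) = ⁅X, Y⁆ := by rw [hhom, hu, hv]
    have huu : F (B u (B u v)) = 0 := by
      apply hFI
      rw [← hker, LinearMap.mem_ker, hhom, hhom, hu, hv, hXX]
    have hvv : F (B v (B u v)) = 0 := by
      apply hFI
      rw [← hker, LinearMap.mem_ker, hhom, hhom, hu, hv, hYY]
    have e1 : F (B u v) = F v * F u - F u * F v := hR1 u v
    have e2 : F (B u v) * F u - F u * F (B u v) = 0 := by rw [← hR1]; exact huu
    have e3 : F (B u v) * F v - F v * F (B u v) = 0 := by rw [← hR1]; exact hvv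
    rw [e1] at e2 e3
    have m2 := congrArg E e2
    have m3 := congrArg E e3
    simp only [map_sub, map_mul, map_zero] at m2 m3
    have hcomm := two_by_two_comm (E (F v)) (E (F u))
      ((sub_eq_zero.mp m3).symm) ((sub_eq_zero.mp m2).symm)
    have hE0 : E (F (B u v)) = 0 := by
      rw [e1, map_sub, map_mul, map_mul]
      exact hcomm
    have hFBuv : F (B u v) = 0 := by
      apply E.injective
      rw [hE0, map_zero]
    rw [hFpi w (B u v) (by rw [hw, hC]), hFBuv]
  -- elementary matrices act trivially
  have hEb : ∀ (i j : Fin n) (hij : j ≠ i), ∀ w : L, π w = Eb ℂ i j hij → F w = 0 := by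
    intro i j hij w hw
    obtain ⟨k, hki, hkj⟩ : ∃ k : Fin n, k ≠ i ∧ k ≠ j := by
      by_contra hcon
      push_neg at hcon
      have hsub : (Finset.univ : Finset (Fin n)) ⊆ {i, j} := by
        intro k _
        simp only [Finset.mem_insert, Finset.mem_singleton]
        rcases eq_or_ne k i with h | h
        · exact Or.inl h
        · exact Or.inr (hcon k h)
      have hcard := Finset.card_le_card hsub
      have h2 : ({i, j} : Finset (Fin n)).card ≤ 2 := by
        apply le_trans (Finset.card_insert_le _ _)
        simp
      rw [Finset.card_univ, Fintype.card_fin] at hcard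
      omega
    have hXY : ⁅Eb ℂ i k hki, Eb ℂ k j hkj.symm⁆ = Eb ℂ i j hij := by
      apply Subtype.ext
      rw [LieAlgebra.SpecialLinear.sl_bracket]
      simp [Ring.lie_def, hij]
    refine hgen (Eb ℂ i k hki) (Eb ℂ k j hkj.symm) ?_ ?_ w (by rw [hw, hXY])
    · rw [hXY]
      apply Subtype.ext
      rw [LieAlgebra.SpecialLinear.sl_bracket]
      simp [Ring.lie_def, hki, hij]
    · rw [hXY]
      apply Subtype.ext
      rw [LieAlgebra.SpecialLinear.sl_bracket]
      simp [Ring.lie_def, hij, hkj.symm]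
  -- diagonal brackets act trivially
  have hEbDiag : ∀ (i j : Fin n) (hij : j ≠ i), ∀ w : L,
      π w = ⁅Eb ℂ i j hij, Eb ℂ j i hij.symm⁆ → F w = 0 := by
    intro i j hij w hw
    obtain ⟨u, hu⟩ := hsurj (Eb ℂ i j hij)
    obtain ⟨v, hv⟩ := hsurj (Eb ℂ j i hij.symm)
    have hFu : F u = 0 := hEb i j hij u hu
    have hFv : F v = 0 := hEb j i hij.symm v hv
    have hBuv : F (B u v) = 0 := by rw [hR1, hFu, hFv]; simp
    have hπ : π (B u v) = ⁅Eb ℂ i j hij, Eb ℂ j i hij.symm⁆ := by rw [hhom, hu, hv]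
    rw [hFpi w (B u v) (by rw [hw, hπ]), hBuv]
  -- all of L acts trivially on I
  have hall : ∀ w : L, F w = 0 := by
    intro w
    set T : Submodule ℂ ↥(sl (Fin n) ℂ) := (LinearMap.ker F).map π with hTdef
    have hT1 : ∀ (X : ↥(sl (Fin n) ℂ)), X ∈ T → ∀ y : L, π y = X → F y = 0 := by
      intro X hX y hy
      obtain ⟨z, hz, hzX⟩ := hX
      rw [hFpi y z (by rw [hy, hzX])]
      exact hz
    have hTEb : ∀ (i j : Fin n) (hij : j ≠ i), Eb ℂ i j hij ∈ T := by
      intro i j hij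
      obtain ⟨u, hu⟩ := hsurj (Eb ℂ i j hij)
      exact ⟨u, LinearMap.mem_ker.mpr (hEb i j hij u hu), hu⟩
    have hTDiag : ∀ (i j : Fin n) (hij : j ≠ i),
        ⁅Eb ℂ i j hij, Eb ℂ j i hij.symm⁆ ∈ T := by
      intro i j hij
      obtain ⟨u, hu⟩ := hsurj (⁅Eb ℂ i j hij, Eb ℂ j i hij.symm⁆)
      exact ⟨u, LinearMap.mem_ker.mpr (hEbDiag i j hij u hu), hu⟩
    -- inclusion of sl into matrices
    let ι : ↥(sl (Fin n) ℂ) →ₗ[ℂ] Matrix (Fin n) (Fin n) ℂ :=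
      { toFun := Subtype.val, map_add' := fun _ _ => rfl, map_smul' := fun _ _ => rfl }
    set U : Submodule ℂ (Matrix (Fin n) (Fin n) ℂ) := T.map ι with hUdef
    have hU1 : ∀ (i j : Fin n), j ≠ i → Matrix.single i j (1 : ℂ) ∈ U := by
      intro i j hij
      exact ⟨Eb ℂ i j hij, hTEb i j hij, rfl⟩
    have hU2 : ∀ (i j : Fin n), j ≠ i →
        Matrix.single i i (1 : ℂ) - Matrix.single j j (1 : ℂ) ∈ U := by
      intro i j hij
      refine ⟨⁅Eb ℂ i j hij, Eb ℂ j i hij.symm⁆, hTDiag i j hij, ?_⟩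
      show (⁅Eb ℂ i j hij, Eb ℂ j i hij.symm⁆ : ↥(sl (Fin n) ℂ)).val = _
      rw [LieAlgebra.SpecialLinear.sl_bracket]
      simp [Ring.lie_def]
    have i0 : Fin n := ⟨0, by omega⟩
    have hMU : ∀ M : Matrix (Fin n) (Fin n) ℂ, Matrix.trace M = 0 → M ∈ U := by
      intro M hMtr
      have htr : ∑ k : Fin n, M k k = 0 := hMtr
      set S : Matrix (Fin n) (Fin n) ℂ :=
        ∑ i : Fin n, M i i • (Matrix.single i i (1 : ℂ) -
          Matrix.single i0 i0 (1 : ℂ)) with hSdef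
      have hSU : S ∈ U := by
        apply Submodule.sum_mem
        intro i _
        by_cases hi : i = i0
        · rw [hi, sub_self, smul_zero]
          exact U.zero_mem
        · exact Submodule.smul_mem _ _ (hU2 i i0 (Ne.symm hi))
      have hNdiag : ∀ i : Fin n, (M - S) i i = 0 := by
        intro i
        have hS : S i i = M i i := by
          rw [hSdef]
          simp only [Matrix.sum_apply, Matrix.smul_apply, Matrix.sub_apply, smul_eq_mul]
          by_cases hi : i = i0
          · subst hi
            simp only [Matrix.single_apply_same]
            calc ∑ k : Fin n, M k k * ((Matrix.single k k (1:ℂ)) i i - 1)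
                = ∑ k : Fin n, (M k k * (Matrix.single k k (1:ℂ)) i i - M k k) := by
                  apply Finset.sum_congr rfl; intro k _; ring
              _ = (∑ k : Fin n, M k k * (Matrix.single k k (1:ℂ)) i i) -
                  ∑ k : Fin n, M k k := by rw [Finset.sum_sub_distrib]
              _ = M i i := by
                  rw [htr, sub_zero]
                  rw [Finset.sum_eq_single i]
                  · simp
                  · intro k _ hk
                    rw [Matrix.single_apply_of_ne]
                    · ring
                    · tauto
                  · simp
          · have h0 : (Matrix.single i0 i0 (1:ℂ)) i i = 0 := by
              rw [Matrix.single_apply_of_ne]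
              tauto
            rw [Finset.sum_eq_single i]
            · simp [h0]
            · intro k _ hk
              rw [h0, Matrix.single_apply_of_ne]
              · ring
              · tauto
            · simp
        rw [Matrix.sub_apply, hS, sub_self]
      have hNU : M - S ∈ U := by
        rw [Matrix.matrix_eq_sum_single (M - S)]
        apply Submodule.sum_mem
        intro i _
        apply Submodule.sum_mem
        intro j _
        by_cases hij : j = i
        · subst hij
          rw [hNdiag j]
          simp
        · have : Matrix.single i j ((M - S) i j)
              = ((M - S) i j) • Matrix.single i j (1 : ℂ) := by
            rw [Matrix.smul_single, smul_eq_mul, mul_one]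
          rw [this]
          exact Submodule.smul_mem _ _ (hU1 i j hij)
      have : M = (M - S) + S := by abel
      rw [this]
      exact Submodule.add_mem _ hNU hSU
    -- conclude
    have htrw : Matrix.trace ((π w : ↥(sl (Fin n) ℂ)) : Matrix (Fin n) (Fin n) ℂ) = 0 :=
      (π w).2
    obtain ⟨X', hX'T, hval⟩ := hMU _ htrw
    have hXX' : X' = π w := Subtype.ext hval
    exact hT1 (π w) (hXX' ▸ hX'T) w rfl
  -- finish
  intro a ha y
  refine ⟨?_, hBright y a ha⟩
  have h0 := hall y
  have : (F y) ⟨a, ha⟩ = 0 := by rw [h0]; rfl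
  exact congrArg Subtype.val this
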